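/- Let R be a commutative ring and x ∈ R. For all natural numbers n and m, the Bell polynomials satisfy the polynomial Spivey formula: B_{n+m}(x) = \sum_{j=0}^{m} \sum_{k=0}^{n} S(m,j) * C(n,k) * j^{n-k} * x^j * B_k(x) (with the convention 0^0 = 1). -/

import Mathlib

/-- Stirling numbers of the second kind. -/
def stirling2 : ℕ → ℕ → ℕ
  | 0, 0 => 1
  | 0, _ + 1 => 0
  | _ + 1, 0 => 0
  | n + 1, k + 1 => stirling2 n k + (k + 1) * stirling2 n (k + 1)

lemma stirling2_zero_succ (k : ℕ) : stirling2 0 (k+1) = 0 := rfl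
lemma stirling2_succ_zero (n : ℕ) : stirling2 (n+1) 0 = 0 := rfl
lemma stirling2_succ (n k : ℕ) :
    stirling2 (n+1) (k+1) = stirling2 n k + (k + 1) * stirling2 n (k + 1) := rfl

lemma stirling2_eq_zero {n k : ℕ} (h : n < k) : stirling2 n k = 0 := by
  induction n generalizing k with
  | zero => cases k with | zero => omega | succ k => rfl
  | succ n ih =>
    cases k with
    | zero => omega
    | succ k =>
      rw [stirling2_succ, ih (by omega), ih (by omega), Nat.mul_zero]

lemma stirling2_succ_succ (n k : ℕ) :
    stirling2 (n+1) (k+1) = ∑ i ∈ Finset.range (n+1), Nat.choose n i * stirling2 i k := by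
  induction n generalizing k with
  | zero => simp [stirling2_succ, stirling2_zero_succ]
  | succ n ih =>
    have hsplit : ∑ i ∈ Finset.range (n+2), Nat.choose (n+1) i * stirling2 i k
        = ∑ i ∈ Finset.range (n+1), Nat.choose n i * stirling2 (i+1) k
          + ∑ i ∈ Finset.range (n+1), Nat.choose n i * stirling2 i k := by
      rw [Finset.sum_range_succ' (fun i => Nat.choose (n+1) i * stirling2 i k)]
      conv_rhs => rw [Finset.sum_range_succ' (fun i => Nat.choose n i * stirling2 i k)]
      simp only [Nat.choose_succ_succ, Nat.add_mul, Finset.sum_add_distrib]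
      rw [Finset.sum_range_succ (fun i => Nat.choose n (i+1) * stirling2 (i+1) k)]
      simp only [Nat.choose_succ_self, Nat.zero_mul, Nat.add_zero, Nat.choose_zero_right]
      ring
    have hmid : ∑ i ∈ Finset.range (n+1), Nat.choose n i * stirling2 (i+1) k
        = stirling2 (n+1) k + k * ∑ i ∈ Finset.range (n+1), Nat.choose n i * stirling2 i k := by
      cases k with
      | zero => simp [stirling2_succ_zero]
      | succ k =>
        calc ∑ i ∈ Finset.range (n+1), Nat.choose n i * stirling2 (i+1) (k+1)
            = ∑ i ∈ Finset.range (n+1), (Nat.choose n i * stirling2 i k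
                + (k+1) * (Nat.choose n i * stirling2 i (k+1))) := by
              refine Finset.sum_congr rfl fun i _ => ?_
              rw [stirling2_succ]; ring
          _ = ∑ i ∈ Finset.range (n+1), Nat.choose n i * stirling2 i k
                + (k+1) * ∑ i ∈ Finset.range (n+1), Nat.choose n i * stirling2 i (k+1) := by
              rw [Finset.sum_add_distrib, Finset.mul_sum]
          _ = stirling2 (n+1) (k+1)
                + (k+1) * ∑ i ∈ Finset.range (n+1), Nat.choose n i * stirling2 i (k+1) := by
              rw [ih k]
    rw [hsplit, hmid, stirling2_succ, ih k]
    ring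

/-- Bell polynomials. -/
def bellPoly {R : Type*} [CommRing R] (x : R) (n : ℕ) : R :=
  ∑ k ∈ Finset.range (n + 1), (stirling2 n k : R) * x ^ k

section
variable {R : Type*} [CommRing R]

lemma bellPoly_eq_sum_range_succ (x : R) (i n : ℕ) (h : i ≤ n) :
    bellPoly x i = ∑ k ∈ Finset.range (n+1), (stirling2 i k : R) * x ^ k := by
  rw [bellPoly]
  refine Finset.sum_subset (by intro a ha; simp at ha ⊢; omega) ?_
  intro k hk hk'
  simp only [Finset.mem_range] at hk hk'
  rw [stirling2_eq_zero (by omega)]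
  simp

lemma bellPoly_succ (x : R) (n : ℕ) :
    bellPoly x (n+1) = x * ∑ i ∈ Finset.range (n+1), (Nat.choose n i : R) * bellPoly x i := by
  rw [bellPoly, Finset.sum_range_succ' (fun k => (stirling2 (n+1) k : R) * x ^ k)]
  rw [stirling2_succ_zero]
  simp only [Nat.cast_zero, zero_mul, pow_zero, mul_one, add_zero]
  calc ∑ k ∈ Finset.range (n+1), (stirling2 (n+1) (k+1) : R) * x ^ (k+1)
      = ∑ k ∈ Finset.range (n+1), ∑ i ∈ Finset.range (n+1),
          (Nat.choose n i : R) * ((stirling2 i k : R) * x ^ k) * x := by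
        refine Finset.sum_congr rfl fun k _ => ?_
        rw [stirling2_succ_succ]
        push_cast
        rw [Finset.sum_mul]
        refine Finset.sum_congr rfl fun i _ => ?_
        ring
    _ = x * ∑ i ∈ Finset.range (n+1), (Nat.choose n i : R) * bellPoly x i := by
        rw [Finset.sum_comm, Finset.mul_sum]
        refine Finset.sum_congr rfl fun i hi => ?_
        simp only [Finset.mem_range] at hi
        rw [bellPoly_eq_sum_range_succ x i n (by omega), Finset.mul_sum, Finset.mul_sum]
        refine Finset.sum_congr rfl fun k _ => ?_
        ring

lemma key_inner (y : R) (n i : ℕ) (hi : i ≤ n) :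
    ∑ k ∈ Finset.range (n+1), (Nat.choose n k : R) * (Nat.choose k i : R) * y ^ (n-k)
      = (Nat.choose n i : R) * (y + 1) ^ (n - i) := by
  have h1 : ∑ k ∈ Finset.range (n+1), (Nat.choose n k : R) * (Nat.choose k i : R) * y ^ (n-k)
      = ∑ k ∈ Finset.Ico i (n+1), (Nat.choose n k : R) * (Nat.choose k i : R) * y ^ (n-k) := by
    rw [eq_comm]
    refine Finset.sum_subset (by intro a ha; simp at ha ⊢; omega) ?_
    intro k hk hk'
    simp only [Finset.mem_range, Finset.mem_Ico] at hk hk'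
    rw [Nat.choose_eq_zero_of_lt (show k < i by omega)]
    simp
  rw [h1, Finset.sum_Ico_eq_sum_range]
  have h2 : n + 1 - i = (n - i) + 1 := by omega
  rw [h2]
  have h3 : ∀ t ∈ Finset.range ((n-i)+1),
      (Nat.choose n (i+t) : R) * (Nat.choose (i+t) i : R) * y ^ (n-(i+t))
        = (Nat.choose n i : R) * ((Nat.choose (n-i) t : R) * y ^ ((n-i)-t)) := by
    intro t ht
    simp only [Finset.mem_range] at ht
    have hmul := Nat.choose_mul (n := n) (show i ≤ i + t by omega)
    rw [show (i+t) - i = t by omega] at hmul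
    have : ((Nat.choose n (i+t) * Nat.choose (i+t) i : ℕ) : R)
        = ((Nat.choose n i * Nat.choose (n-i) t : ℕ) : R) := by rw [hmul]
    push_cast at this
    rw [show n - (i+t) = (n-i) - t by omega, ← mul_assoc, this]
  rw [Finset.sum_congr rfl h3, ← Finset.mul_sum]
  congr 1
  rw [show y + 1 = 1 + y by ring, add_pow]
  refine Finset.sum_congr rfl fun t _ => ?_
  simp [mul_comm]

end

section
variable {R : Type*} [CommRing R]

/-- helper sum -/
def bellA (x y : R) (n : ℕ) : R :=
  ∑ k ∈ Finset.range (n+1), (Nat.choose n k : R) * y^(n-k) * bellPoly x k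

lemma bell_shift (x y : R) (n : ℕ) :
    ∑ k ∈ Finset.range (n+1), (Nat.choose n k : R) * y^(n-k) * bellPoly x (k+1)
      = x * bellA x (y+1) n := by
  calc ∑ k ∈ Finset.range (n+1), (Nat.choose n k : R) * y^(n-k) * bellPoly x (k+1)
      = ∑ k ∈ Finset.range (n+1), ∑ i ∈ Finset.range (n+1),
          x * ((Nat.choose n k : R) * (Nat.choose k i : R) * y^(n-k)) * bellPoly x i := by
        refine Finset.sum_congr rfl fun k hk => ?_
        simp only [Finset.mem_range] at hk
        rw [bellPoly_succ]
        have hext : ∑ i ∈ Finset.range (k+1), (Nat.choose k i : R) * bellPoly x i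
            = ∑ i ∈ Finset.range (n+1), (Nat.choose k i : R) * bellPoly x i := by
          refine Finset.sum_subset (by intro a ha; simp at ha ⊢; omega) ?_
          intro i hi hi'
          simp only [Finset.mem_range] at hi hi'
          rw [Nat.choose_eq_zero_of_lt (by omega)]
          simp
        rw [hext, Finset.mul_sum, Finset.mul_sum]
        refine Finset.sum_congr rfl fun i _ => ?_
        ring
    _ = ∑ i ∈ Finset.range (n+1),
          x * (∑ k ∈ Finset.range (n+1),
            (Nat.choose n k : R) * (Nat.choose k i : R) * y^(n-k)) * bellPoly x i := by
        rw [Finset.sum_comm]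
        refine Finset.sum_congr rfl fun i _ => ?_
        rw [Finset.mul_sum, Finset.sum_mul]
    _ = x * bellA x (y+1) n := by
        rw [bellA, Finset.mul_sum]
        refine Finset.sum_congr rfl fun i hi => ?_
        simp only [Finset.mem_range] at hi
        rw [key_inner y n i (by omega)]
        ring

lemma pascal_sum (x y : R) (n : ℕ) :
    ∑ k ∈ Finset.range (n+2), (Nat.choose (n+1) k : R) * y^(n+1-k) * bellPoly x k
      = y * bellA x y n
        + ∑ k ∈ Finset.range (n+1), (Nat.choose n k : R) * y^(n-k) * bellPoly x (k+1) := by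
  rw [Finset.sum_range_succ' (fun k => (Nat.choose (n+1) k : R) * y^(n+1-k) * bellPoly x k)]
  have h1 : ∀ k ∈ Finset.range (n+1),
      (Nat.choose (n+1) (k+1) : R) * y^(n+1-(k+1)) * bellPoly x (k+1)
        = (Nat.choose n k : R) * y^(n-k) * bellPoly x (k+1)
          + (Nat.choose n (k+1) : R) * y^(n-k) * bellPoly x (k+1) := by
    intro k _
    rw [Nat.choose_succ_succ, show n+1-(k+1) = n-k by omega]
    push_cast
    ring
  rw [Finset.sum_congr rfl h1, Finset.sum_add_distrib]
  have h2 : ∑ k ∈ Finset.range (n+1), (Nat.choose n (k+1) : R) * y^(n-k) * bellPoly x (k+1)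
        + (Nat.choose (n+1) 0 : R) * y^(n+1-0) * bellPoly x 0
      = y * bellA x y n := by
    rw [bellA, Finset.mul_sum,
      Finset.sum_range_succ' (fun k => y * ((Nat.choose n k : R) * y^(n-k) * bellPoly x k)),
      Finset.sum_range_succ (fun k => (Nat.choose n (k+1) : R) * y^(n-k) * bellPoly x (k+1))]
    rw [Nat.choose_succ_self]
    congr 1
    · rw [Nat.cast_zero, zero_mul, zero_mul, add_zero]
      refine Finset.sum_congr rfl fun k hk => ?_
      simp only [Finset.mem_range] at hk
      rw [show n - k = (n - (k+1)) + 1 by omega, pow_succ]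
      ring
    · simp [pow_succ]
      ring
  rw [add_assoc, h2]
  ring

end

section
variable {R : Type*} [CommRing R]

lemma combined (x y : R) (n : ℕ) :
    ∑ k ∈ Finset.range (n+2), (Nat.choose (n+1) k : R) * y^(n+1-k) * bellPoly x k
      = y * bellA x y n + x * bellA x (y+1) n := by
  rw [pascal_sum, bell_shift]

lemma Fstep (x : R) (n m : ℕ) :
    ∑ j ∈ Finset.range (m+1), ∑ k ∈ Finset.range (n+2),
        (stirling2 m j : R) * (Nat.choose (n+1) k : R) * (j : R) ^ (n+1-k) * x ^ j *
          bellPoly x k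
      = ∑ j ∈ Finset.range (m+2), ∑ k ∈ Finset.range (n+1),
        (stirling2 (m+1) j : R) * (Nat.choose n k : R) * (j : R) ^ (n-k) * x ^ j *
          bellPoly x k := by
  have hL : ∑ j ∈ Finset.range (m+1), ∑ k ∈ Finset.range (n+2),
        (stirling2 m j : R) * (Nat.choose (n+1) k : R) * (j : R) ^ (n+1-k) * x ^ j *
          bellPoly x k
      = ∑ j ∈ Finset.range (m+1), (stirling2 m j : R) * x ^ j *
          ((j:R) * bellA x (j:R) n + x * bellA x ((j:R)+1) n) := by
    refine Finset.sum_congr rfl fun j _ => ?_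
    rw [← combined, Finset.mul_sum]
    refine Finset.sum_congr rfl fun k _ => ?_
    ring
  have hR : ∑ j ∈ Finset.range (m+2), ∑ k ∈ Finset.range (n+1),
        (stirling2 (m+1) j : R) * (Nat.choose n k : R) * (j : R) ^ (n-k) * x ^ j *
          bellPoly x k
      = ∑ j ∈ Finset.range (m+2), (stirling2 (m+1) j : R) * x ^ j * bellA x (j:R) n := by
    refine Finset.sum_congr rfl fun j _ => ?_
    rw [bellA, Finset.mul_sum]
    refine Finset.sum_congr rfl fun k _ => ?_
    ring
  rw [hL, hR]
  rw [Finset.sum_range_succ' (fun j => (stirling2 (m+1) j : R) * x ^ j * bellA x (j:R) n)]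
  rw [stirling2_succ_zero]
  simp only [Nat.cast_zero, zero_mul, add_zero]
  have h1 : ∀ j ∈ Finset.range (m+1),
      (stirling2 (m+1) (j+1) : R) * x ^ (j+1) * bellA x ((j+1 : ℕ):R) n
        = (stirling2 m j : R) * x ^ j * (x * bellA x ((j:R)+1) n)
          + (((j:R)+1) * (stirling2 m (j+1) : R) * x ^ (j+1) * bellA x ((j:R)+1) n) := by
    intro j _
    rw [stirling2_succ]
    push_cast
    ring
  rw [Finset.sum_congr rfl h1, Finset.sum_add_distrib]
  have hshift : ∑ j ∈ Finset.range (m+1),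
        (((j:R)+1) * (stirling2 m (j+1) : R) * x ^ (j+1) * bellA x ((j:R)+1) n)
      = ∑ j ∈ Finset.range (m+1),
        ((j:R) * (stirling2 m j : R) * x ^ j * bellA x (j:R) n) := by
    have hp : ∀ j, (((j:ℕ):R) * (stirling2 m j : R) * x ^ j * bellA x ((j:ℕ):R) n) =
        (fun j => ((j:ℕ):R) * (stirling2 m j : R) * x ^ j * bellA x ((j:ℕ):R) n) j :=
      fun _ => rfl
    rw [Finset.sum_range_succ (fun j =>
        (((j:R)+1) * (stirling2 m (j+1) : R) * x ^ (j+1) * bellA x ((j:R)+1) n))]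
    rw [stirling2_eq_zero (Nat.lt_succ_self m)]
    rw [Finset.sum_range_succ' (fun j =>
        ((j:R) * (stirling2 m j : R) * x ^ j * bellA x ((j:ℕ):R) n))]
    simp only [Nat.cast_zero, zero_mul, add_zero, mul_zero, zero_mul]
    refine Finset.sum_congr rfl fun j _ => ?_
    push_cast
    ring
  rw [hshift, ← Finset.sum_add_distrib]
  refine Finset.sum_congr rfl fun j _ => ?_
  ring

end

/-- Polynomial version of Spivey's Bell number formula. -/
theorem spivey_bell_poly {R : Type*} [CommRing R] (x : R) (n m : ℕ) :
    bellPoly x (n + m) =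
      ∑ j ∈ Finset.range (m + 1), ∑ k ∈ Finset.range (n + 1),
        (stirling2 m j : R) * (Nat.choose n k : R) * (j : R) ^ (n - k) * x ^ j *
          bellPoly x k := by
  induction m generalizing n with
  | zero =>
    rw [Finset.sum_range_one]
    have hz : ∀ k ∈ Finset.range n,
        (stirling2 0 0 : R) * (Nat.choose n k : R) * ((0:ℕ) : R) ^ (n-k) * x ^ 0 *
          bellPoly x k = 0 := by
      intro k hk
      simp only [Finset.mem_range] at hk
      rw [Nat.cast_zero, zero_pow (show n - k ≠ 0 by omega)]
      ring
    rw [Finset.sum_range_succ, Finset.sum_eq_zero hz, zero_add]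
    simp [stirling2]
  | succ m ih =>
    rw [show n + (m+1) = (n+1) + m by omega, ih (n+1), Fstep]
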